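/- Let σ be a permutation of {1,…,n}, let the indices {1,…,n} be partitioned into K groups, and let c : {1,…,n}² → ℝ be a cost function satisfying: c(i,j') > c(i,j) whenever i and j belong to the same group and i and j' belong to different groups. Suppose σ maps some index to an index in a different group. Then there exists a permutation σ' that maps every index to an index within its own group with Σᵢ c(i, σ'(i)) < Σᵢ c(i, σ(i)). -/

import Mathlib

section Aux

variable {n K : ℕ} (g : Fin n → Fin K)

lemma ret_ex (σ : Equiv.Perm (Fin n)) (i : Fin n) :
    ∃ k, 0 < k ∧ g ((σ ^ k) i) = g i := by
  refine ⟨orderOf σ, ?_, ?_⟩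
  · exact orderOf_pos σ
  · rw [pow_orderOf_eq_one]; rfl

noncomputable def retm (σ : Equiv.Perm (Fin n)) (i : Fin n) : ℕ :=
  Nat.find (ret_ex g σ i)

noncomputable def ret (σ : Equiv.Perm (Fin n)) (i : Fin n) : Fin n :=
  (σ ^ retm g σ i) i

lemma retm_pos (σ : Equiv.Perm (Fin n)) (i : Fin n) : 0 < retm g σ i :=
  (Nat.find_spec (ret_ex g σ i)).1

lemma ret_group (σ : Equiv.Perm (Fin n)) (i : Fin n) : g (ret g σ i) = g i :=
  (Nat.find_spec (ret_ex g σ i)).2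

lemma ret_leftInv (σ : Equiv.Perm (Fin n)) (i : Fin n) :
    ret g σ⁻¹ (ret g σ i) = i := by
  set m := retm g σ i with hmdef
  set x := (σ ^ m) i with hxdef
  have hx : g x = g i := ret_group g σ i
  have h1 : (σ⁻¹ ^ m) x = i := by
    rw [inv_pow, hxdef]
    exact Equiv.symm_apply_apply _ _
  have hle : retm g σ⁻¹ x ≤ m := by
    apply Nat.find_le
    refine ⟨retm_pos g σ i, ?_⟩
    rw [h1, hx]
  have hge : ¬ retm g σ⁻¹ x < m := by
    intro hlt
    set m' := retm g σ⁻¹ x with hm'def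
    have hm'pos : 0 < m' := retm_pos g σ⁻¹ x
    have hcomp : (σ⁻¹ ^ m') x = (σ ^ (m - m')) i := by
      have : σ ^ m = σ ^ m' * σ ^ (m - m') := by
        rw [← pow_add]
        congr 1
        omega
      rw [hxdef, this]
      simp [inv_pow, Equiv.Perm.mul_apply]
    have hgr : g ((σ⁻¹ ^ m') x) = g x := (Nat.find_spec (ret_ex g σ⁻¹ x)).2
    have : g ((σ ^ (m - m')) i) = g i := by rw [← hcomp, hgr, hx]
    exact Nat.find_min (ret_ex g σ i) (show m - m' < m by omega) ⟨by omega, this⟩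
  have hm' : retm g σ⁻¹ x = m := by omega
  show (σ⁻¹ ^ retm g σ⁻¹ x) x = i
  rw [hm', h1]

lemma ret_fix (σ : Equiv.Perm (Fin n)) (i : Fin n) (h : g (σ i) = g i) :
    ret g σ i = σ i := by
  have h1 : retm g σ i ≤ 1 := Nat.find_le ⟨one_pos, by simpa using h⟩
  have h2 : retm g σ i = 1 := le_antisymm h1 (retm_pos g σ i)
  show (σ ^ retm g σ i) i = σ i
  rw [h2, pow_one]

noncomputable def retPerm (σ : Equiv.Perm (Fin n)) : Equiv.Perm (Fin n) where
  toFun := ret g σ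
  invFun := ret g σ⁻¹
  left_inv := ret_leftInv g σ
  right_inv := fun i => by
    have := ret_leftInv g σ⁻¹ i
    rwa [inv_inv] at this

end Aux

/-- If the indices are partitioned into groups (via a group-labelling map `g`),
the cost satisfies `c i j < c i j'` whenever `j` is in the same group as `i` and
`j'` is not, and the permutation `σ` maps some index out of its group, then
there is a permutation `σ'` mapping every index within its own group with
strictly smaller total cost. -/
theorem stmt16 (n K : ℕ) (g : Fin n → Fin K) (c : Fin n → Fin n → ℝ)
    (σ : Equiv.Perm (Fin n))
    (hc : ∀ i j j', g j = g i → g j' ≠ g i → c i j < c i j')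
    (hσ : ∃ i, g (σ i) ≠ g i) :
    ∃ σ' : Equiv.Perm (Fin n), (∀ i, g (σ' i) = g i) ∧
      ∑ i, c i (σ' i) < ∑ i, c i (σ i) := by
  refine ⟨retPerm g σ, fun i => ret_group g σ i, ?_⟩
  obtain ⟨i₀, hi₀⟩ := hσ
  apply Finset.sum_lt_sum
  · intro i _
    by_cases h : g (σ i) = g i
    · have : retPerm g σ i = σ i := ret_fix g σ i h
      rw [this]
    · exact le_of_lt (hc i _ _ (ret_group g σ i) h)
  · exact ⟨i₀, Finset.mem_univ i₀, hc i₀ _ _ (ret_group g σ i₀) hi₀⟩
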